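/- Let d ≥ 1, let Π be the orthogonal projection onto the symmetric subspace of (ℂ^d)^{⊗3} (equivalently, Π = (1/6) Σ_{π ∈ S_3} W_π where W_π permutes the three tensor factors), and let T_3 denote the partial transpose on the third tensor factor with respect to the standard basis. Then the operator norm of (1 ⊗ 1 ⊗ T_3)(Π) equals (d+2)/3. Equivalently, since rank(Π) = binom(d+2, 3), the operator Q = (1/rank(Π)) (1 ⊗ 1 ⊗ T_3)(Π) satisfies ‖Q‖ = 2/(d(d+1)). -/

import Mathlib

open Matrix
open scoped Matrix.Norms.L2Operator

/-- The unitary `W_π` permuting the three tensor factors of `(ℂ^d)^{⊗3}`: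
`W_π(|x_1⟩⊗|x_2⟩⊗|x_3⟩) = |x_{π⁻¹(1)}⟩⊗|x_{π⁻¹(2)}⟩⊗|x_{π⁻¹(3)}⟩`. -/
def permOp (d : ℕ) (π : Equiv.Perm (Fin 3)) :
    Matrix (Fin 3 → Fin d) (Fin 3 → Fin d) ℂ :=
  Matrix.of fun f g => if ∀ i, f (π i) = g i then 1 else 0

/-- The orthogonal projection `Π = (1/6) ∑_{π ∈ S_3} W_π` onto the symmetric
subspace of `(ℂ^d)^{⊗3}`. -/
noncomputable def symProj3 (d : ℕ) : Matrix (Fin 3 → Fin d) (Fin 3 → Fin d) ℂ :=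
  (6 : ℂ)⁻¹ • ∑ π : Equiv.Perm (Fin 3), permOp d π

/-- The partial transpose on the third tensor factor, with respect to the
standard basis. -/
def ptransp3 {d : ℕ} (M : Matrix (Fin 3 → Fin d) (Fin 3 → Fin d) ℂ) :
    Matrix (Fin 3 → Fin d) (Fin 3 → Fin d) ℂ :=
  Matrix.of fun f g => M (Function.update f 2 (g 2)) (Function.update g 2 (f 2))

namespace PtAux

variable {d : ℕ}

/-- Swap of the first two tensor factors. -/
def Fm (d : ℕ) : Matrix (Fin 3 → Fin d) (Fin 3 → Fin d) ℂ :=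
  Matrix.of fun f g => if f 0 = g 1 ∧ f 1 = g 0 ∧ f 2 = g 2 then 1 else 0

/-- Contraction (unnormalized maximally entangled projector) between factors 1 and 3. -/
def Gm (d : ℕ) : Matrix (Fin 3 → Fin d) (Fin 3 → Fin d) ℂ :=
  Matrix.of fun f g => if f 0 = f 2 ∧ g 0 = g 2 ∧ f 1 = g 1 then 1 else 0

lemma eta3 (f : Fin 3 → Fin d) : ![f 0, f 1, f 2] = f := by
  funext i; fin_cases i <;> rfl

lemma funext3 {f g : Fin 3 → Fin d} : f = g ↔ f 0 = g 0 ∧ f 1 = g 1 ∧ f 2 = g 2 := by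
  constructor
  · rintro rfl; exact ⟨rfl, rfl, rfl⟩
  · rintro ⟨h0, h1, h2⟩; funext i; fin_cases i <;> assumption

lemma forall3 {P : Fin 3 → Prop} : (∀ i, P i) ↔ P 0 ∧ P 1 ∧ P 2 :=
  ⟨fun h => ⟨h 0, h 1, h 2⟩, by rintro ⟨a, b, c⟩ i; fin_cases i <;> assumption⟩

def e3 (d : ℕ) : (Fin d × Fin d × Fin d) ≃ (Fin 3 → Fin d) where
  toFun p := ![p.1, p.2.1, p.2.2]
  invFun h := (h 0, h 1, h 2)
  left_inv _ := rfl
  right_inv h := eta3 h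

lemma sum_fun3 (φ : (Fin 3 → Fin d) → ℂ) :
    ∑ h : Fin 3 → Fin d, φ h = ∑ a : Fin d, ∑ b : Fin d, ∑ c : Fin d, φ ![a, b, c] := by
  rw [← Equiv.sum_comp (e3 d) φ, Fintype.sum_prod_type]
  simp only [Fintype.sum_prod_type]
  rfl

lemma hFF : Fm d * Fm d = 1 := by
  ext f g
  rw [Matrix.mul_apply, sum_fun3]
  simp [Fm, Matrix.one_apply, funext3 (f := f) (g := g), ite_and, eq_comm]
  rfl

lemma hGG : Gm d * Gm d = (d : ℂ) • Gm d := by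
  ext f g
  rw [Matrix.mul_apply, sum_fun3]
  simp [Gm, ite_and, eq_comm, Finset.mul_sum]
  split_ifs <;> simp_all

lemma hGFG : Gm d * Fm d * Gm d = Gm d := by
  rw [Matrix.mul_assoc]
  ext f g
  rw [Matrix.mul_apply, sum_fun3]
  have hFG : ∀ h, (Fm d * Gm d) h g = if h 1 = h 2 ∧ g 0 = g 2 ∧ h 0 = g 1 then 1 else 0 := by
    intro h
    rw [Matrix.mul_apply, sum_fun3]
    simp [Fm, Gm, ite_and, eq_comm]
    split_ifs
    · simp_all; rfl
    · simp_all
  simp only [hFG]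
  simp [Gm, ite_and, eq_comm]

lemma FG_apply (f g : Fin 3 → Fin d) :
    (Fm d * Gm d) f g = if f 1 = f 2 ∧ g 0 = g 2 ∧ f 0 = g 1 then 1 else 0 := by
  rw [Matrix.mul_apply, sum_fun3]
  simp [Fm, Gm, ite_and, eq_comm]
  split_ifs
  · simp_all; rfl
  · simp_all

lemma mul_F_apply (M : Matrix (Fin 3 → Fin d) (Fin 3 → Fin d) ℂ) (f g : Fin 3 → Fin d) :
    (M * Fm d) f g = M f ![g 1, g 0, g 2] := by
  rw [Matrix.mul_apply, sum_fun3]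
  simp [Fm, ite_and, eq_comm]
  rw [Finset.sum_eq_single (g 2) (by intro b _ hb; simp [hb]) (by simp)]
  simp

lemma GF_apply (f g : Fin 3 → Fin d) :
    (Gm d * Fm d) f g = if f 0 = f 2 ∧ g 1 = g 2 ∧ f 1 = g 0 then 1 else 0 := by
  rw [Matrix.mul_apply, sum_fun3]
  simp [Fm, Gm, ite_and, eq_comm]
  split_ifs <;> simp_all

lemma FGF_apply (f g : Fin 3 → Fin d) :
    (Fm d * Gm d * Fm d) f g = if f 1 = f 2 ∧ g 1 = g 2 ∧ f 0 = g 0 then 1 else 0 := by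
  rw [mul_F_apply, FG_apply]
  simp
  rfl

/-- The (unnormalized) partial transpose of the symmetric projector:
`6 Π^{T_3} = 1 + F + G + GF + FG + FGF`. -/
noncomputable def Bmat (d : ℕ) : Matrix (Fin 3 → Fin d) (Fin 3 → Fin d) ℂ :=
  1 + Fm d + Gm d + Gm d * Fm d + Fm d * Gm d + Fm d * Gm d * Fm d

lemma pt_one : ptransp3 (permOp d 1) = (1 : Matrix (Fin 3 → Fin d) (Fin 3 → Fin d) ℂ) := by
  ext f g
  simp only [ptransp3, permOp, Matrix.of_apply, Matrix.one_apply]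
  refine if_congr ?_ rfl rfl
  rw [forall3]
  constructor
  · rintro ⟨a, b, c⟩; funext i; fin_cases i <;> simp_all [Function.update_apply]
  · rintro rfl; simp [Function.update_apply]

lemma pt_s01 : ptransp3 (permOp d (Equiv.swap 0 1)) = Fm d := by
  ext f g
  simp only [ptransp3, permOp, Fm, Matrix.of_apply]
  refine if_congr ?_ rfl rfl
  rw [forall3]
  simp [Function.update_apply, Equiv.swap_apply_def]
  tauto

lemma pt_s02 : ptransp3 (permOp d (Equiv.swap 0 2)) = Gm d := by
  ext f g
  simp only [ptransp3, permOp, Gm, Matrix.of_apply]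
  refine if_congr ?_ rfl rfl
  rw [forall3]
  simp [Function.update_apply, Equiv.swap_apply_def]
  tauto

lemma pt_s12 : ptransp3 (permOp d (Equiv.swap 1 2)) = Fm d * Gm d * Fm d := by
  ext f g
  simp only [ptransp3, permOp, Matrix.of_apply, FGF_apply]
  refine if_congr ?_ rfl rfl
  rw [forall3]
  simp [Function.update_apply, Equiv.swap_apply_def]
  tauto

lemma pt_rot : ptransp3 (permOp d (finRotate 3)) = Gm d * Fm d := by
  ext f g
  simp only [ptransp3, permOp, Matrix.of_apply, GF_apply]
  refine if_congr ?_ rfl rfl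
  rw [forall3]
  simp [Function.update_apply, finRotate_succ_apply]
  tauto

lemma pt_rot' : ptransp3 (permOp d (finRotate 3)⁻¹) = Fm d * Gm d := by
  ext f g
  simp only [ptransp3, permOp, Matrix.of_apply, FG_apply]
  refine if_congr ?_ rfl rfl
  rw [forall3]
  have h0 : (finRotate 3)⁻¹ (0 : Fin 3) = 2 := by decide
  have h1 : (finRotate 3)⁻¹ (1 : Fin 3) = 0 := by decide
  have h2 : (finRotate 3)⁻¹ (2 : Fin 3) = 1 := by decide
  rw [h0, h1, h2]
  simp [Function.update_apply]
  tauto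

lemma hA : ptransp3 (symProj3 d) = (6 : ℂ)⁻¹ • Bmat d := by
  have hsum : ptransp3 (∑ π : Equiv.Perm (Fin 3), permOp d π)
      = ∑ π : Equiv.Perm (Fin 3), ptransp3 (permOp d π) := by
    ext f g; simp [ptransp3, Matrix.sum_apply]
  have hsmul : ∀ (c : ℂ) (M : Matrix (Fin 3 → Fin d) (Fin 3 → Fin d) ℂ),
      ptransp3 (c • M) = c • ptransp3 M := fun c M => rfl
  rw [symProj3, hsmul, hsum]
  rw [show (Finset.univ : Finset (Equiv.Perm (Fin 3))) =
      {1, Equiv.swap 0 1, Equiv.swap 0 2, Equiv.swap 1 2, finRotate 3, (finRotate 3)⁻¹}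
      from by decide]
  rw [Finset.sum_insert (by decide), Finset.sum_insert (by decide),
    Finset.sum_insert (by decide), Finset.sum_insert (by decide),
    Finset.sum_insert (by decide), Finset.sum_singleton]
  rw [pt_one, pt_s01, pt_s02, pt_s12, pt_rot, pt_rot']
  rw [Bmat]
  module

lemma rF (x : Matrix (Fin 3 → Fin d) (Fin 3 → Fin d) ℂ) : Fm d * (Fm d * x) = x := by
  rw [← Matrix.mul_assoc, hFF, Matrix.one_mul]

lemma rG (x : Matrix (Fin 3 → Fin d) (Fin 3 → Fin d) ℂ) :
    Gm d * (Gm d * x) = (d : ℂ) • (Gm d * x) := by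
  rw [← Matrix.mul_assoc, hGG, Matrix.smul_mul]

lemma rGFG (x : Matrix (Fin 3 → Fin d) (Fin 3 → Fin d) ℂ) :
    Gm d * (Fm d * (Gm d * x)) = Gm d * x := by
  rw [← Matrix.mul_assoc, ← Matrix.mul_assoc, hGFG]

lemma hGFG' : Gm d * (Fm d * Gm d) = Gm d := by rw [← Matrix.mul_assoc, hGFG]

lemma hcubic : Bmat d * Bmat d * Bmat d + (4 * (d : ℂ) + 8) • Bmat d
    = (2 * (d : ℂ) + 6) • (Bmat d * Bmat d) := by
  simp only [Bmat, mul_add, add_mul, one_mul, mul_one, Matrix.mul_assoc,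
    rF, rG, rGFG, hFF, hGG, hGFG, hGFG', mul_smul_comm, smul_mul_assoc, smul_smul]
  module

lemma hFstar : (Fm d)ᴴ = Fm d := by
  ext f g
  simp only [Matrix.conjTranspose_apply, Fm, Matrix.of_apply]
  rw [show ∀ z : ℂ, star z = (starRingEnd ℂ) z from fun _ => rfl]
  rw [apply_ite (starRingEnd ℂ), _root_.map_one, _root_.map_zero]
  refine if_congr ?_ rfl rfl
  constructor <;> (rintro ⟨a, b, c⟩; exact ⟨b.symm, a.symm, c.symm⟩)

lemma hGstar : (Gm d)ᴴ = Gm d := by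
  ext f g
  simp only [Matrix.conjTranspose_apply, Gm, Matrix.of_apply]
  rw [show ∀ z : ℂ, star z = (starRingEnd ℂ) z from fun _ => rfl]
  rw [apply_ite (starRingEnd ℂ), _root_.map_one, _root_.map_zero]
  refine if_congr ?_ rfl rfl
  constructor <;> (rintro ⟨a, b, c⟩; exact ⟨b, a, c.symm⟩)

lemma hBstar : (Bmat d)ᴴ = Bmat d := by
  simp only [Bmat, Matrix.conjTranspose_add, Matrix.conjTranspose_one,
    Matrix.conjTranspose_mul, hFstar, hGstar, Matrix.mul_assoc]
  abel

lemma hAsa : IsSelfAdjoint (ptransp3 (symProj3 d)) := by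
  rw [hA]
  show ((6 : ℂ)⁻¹ • Bmat d)ᴴ = (6 : ℂ)⁻¹ • Bmat d
  rw [Matrix.conjTranspose_smul, hBstar]
  norm_num

section eigen
variable (d : ℕ) [NeZero d]

def u1 (d : ℕ) [NeZero d] : (Fin 3 → Fin d) → ℂ :=
  fun f => if f 1 = 0 ∧ f 0 = f 2 then 1 else 0

def u2 (d : ℕ) [NeZero d] : (Fin 3 → Fin d) → ℂ :=
  fun f => if f 0 = 0 ∧ f 1 = f 2 then 1 else 0

lemma hFu1 : Fm d *ᵥ u1 d = u2 d := by
  funext f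
  rw [Matrix.mulVec, dotProduct, sum_fun3]
  simp [Fm, u1, u2, ite_and, eq_comm]

lemma hFu2 : Fm d *ᵥ u2 d = u1 d := by
  funext f
  rw [Matrix.mulVec, dotProduct, sum_fun3]
  simp [Fm, u1, u2, ite_and, eq_comm]

lemma hGu1 : Gm d *ᵥ u1 d = (d : ℂ) • u1 d := by
  funext f
  rw [Matrix.mulVec, dotProduct, sum_fun3]
  simp [Gm, u1, ite_and, eq_comm]
  split_ifs <;> simp

lemma hGu2 : Gm d *ᵥ u2 d = u1 d := by
  funext f
  rw [Matrix.mulVec, dotProduct, sum_fun3]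
  simp [Gm, u1, u2, ite_and, eq_comm]
  split_ifs <;> rfl

lemma hBv : Bmat d *ᵥ (u1 d + u2 d) = (2 * (d : ℂ) + 4) • (u1 d + u2 d) := by
  simp only [Bmat, Matrix.add_mulVec, Matrix.one_mulVec, ← Matrix.mulVec_mulVec,
    Matrix.mulVec_add, hFu1, hFu2, hGu1, hGu2, Matrix.mulVec_smul]
  module

lemma hvne : u1 d + u2 d ≠ 0 := by
  intro h
  have := congrFun h (fun _ => (0 : Fin d))
  simp [u1, u2] at this

lemma hAv : ptransp3 (symProj3 d) *ᵥ (u1 d + u2 d)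
    = (((d : ℂ) + 2) / 3) • (u1 d + u2 d) := by
  rw [hA, Matrix.smul_mulVec, hBv, smul_smul]
  congr 1
  ring

lemma hmem : ((d : ℂ) + 2) / 3 ∈ spectrum ℂ (ptransp3 (symProj3 d)) := by
  rw [spectrum.mem_iff]
  intro hu
  set N := algebraMap ℂ (Matrix (Fin 3 → Fin d) (Fin 3 → Fin d) ℂ) (((d : ℂ) + 2) / 3)
      - ptransp3 (symProj3 d) with hN
  have hNv : N *ᵥ (u1 d + u2 d) = 0 := by
    rw [hN, Matrix.sub_mulVec, Algebra.algebraMap_eq_smul_one, Matrix.smul_mulVec,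
      Matrix.one_mulVec, hAv, sub_self]
  obtain ⟨w, hw⟩ := hu
  have hv : (u1 d + u2 d) = 0 := by
    have h1 : ((w⁻¹ : (Matrix (Fin 3 → Fin d) (Fin 3 → Fin d) ℂ)ˣ) :
        Matrix (Fin 3 → Fin d) (Fin 3 → Fin d) ℂ) * N = 1 := by
      rw [← hw]; exact w.inv_mul
    calc u1 d + u2 d = (1 : Matrix (Fin 3 → Fin d) (Fin 3 → Fin d) ℂ) *ᵥ (u1 d + u2 d) := by
          rw [Matrix.one_mulVec]
      _ = (↑w⁻¹ * N) *ᵥ (u1 d + u2 d) := by rw [h1]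
      _ = ↑w⁻¹ *ᵥ (N *ᵥ (u1 d + u2 d)) := by rw [Matrix.mulVec_mulVec]
      _ = 0 := by rw [hNv, Matrix.mulVec_zero]
  exact hvne d hv

end eigen

noncomputable instance (priority := 10) :
    CStarAlgebra (Matrix (Fin 3 → Fin d) (Fin 3 → Fin d) ℂ) :=
  { Matrix.instL2OpNormedRing, Matrix.instCStarRing, Matrix.instL2OpNormedAlgebra,
    (FiniteDimensional.complete ℂ (Matrix (Fin 3 → Fin d) (Fin 3 → Fin d) ℂ) :
      CompleteSpace _),
    (inferInstance : StarRing _), (inferInstance : StarModule ℂ _) with }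

lemma hAcubic : ptransp3 (symProj3 d) * (ptransp3 (symProj3 d) - (3 : ℂ)⁻¹ • 1)
    * (ptransp3 (symProj3 d) - (((d : ℂ) + 2) / 3) • 1) = 0 := by
  have hB := hcubic (d := d)
  rw [hA]
  have expand : ∀ (M : Matrix (Fin 3 → Fin d) (Fin 3 → Fin d) ℂ),
      M * (M - (3 : ℂ)⁻¹ • 1) * (M - (((d : ℂ) + 2) / 3) • 1)
        = M * M * M + ((3 : ℂ)⁻¹ * (((d : ℂ) + 2) / 3)) • M
          - ((3 : ℂ)⁻¹ + ((d : ℂ) + 2) / 3) • (M * M) := by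
    intro M
    simp only [mul_sub, sub_mul, mul_smul_comm, smul_mul_assoc, mul_one, one_mul,
      smul_smul, Matrix.mul_assoc]
    module
  rw [expand]
  have hB' : Bmat d * Bmat d * Bmat d
      = (2 * (d : ℂ) + 6) • (Bmat d * Bmat d) - (4 * (d : ℂ) + 8) • Bmat d :=
    eq_sub_of_add_eq hB
  simp only [smul_mul_assoc, mul_smul_comm, smul_smul]
  rw [hB']
  simp only [smul_sub, smul_smul]
  match_scalars <;> ring

lemma hsub [NeZero d] :
    spectrum ℂ (ptransp3 (symProj3 d)) ⊆ {0, (3 : ℂ)⁻¹, ((d : ℂ) + 2) / 3} := by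
  intro μ hμ
  haveI : Nonempty (Fin 3 → Fin d) := ⟨fun _ => 0⟩
  set p : Polynomial ℂ :=
    Polynomial.X * (Polynomial.X - Polynomial.C (3 : ℂ)⁻¹)
      * (Polynomial.X - Polynomial.C (((d : ℂ) + 2) / 3)) with hp
  have haev : Polynomial.aeval (ptransp3 (symProj3 d)) p = 0 := by
    rw [hp]
    simp only [_root_.map_mul, map_sub, Polynomial.aeval_X, Polynomial.aeval_C,
      Algebra.algebraMap_eq_smul_one]
    exact hAcubic
  have hmap := spectrum.subset_polynomial_aeval (ptransp3 (symProj3 d)) p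
    ⟨μ, hμ, rfl⟩
  rw [haev, spectrum.zero_eq] at hmap
  have h0 : Polynomial.eval μ p = 0 := hmap
  rw [hp] at h0
  simp only [Polynomial.eval_mul, Polynomial.eval_sub, Polynomial.eval_X,
    Polynomial.eval_C] at h0
  rcases mul_eq_zero.mp h0 with h | h
  · rcases mul_eq_zero.mp h with h | h
    · exact Or.inl h
    · exact Or.inr (Or.inl (sub_eq_zero.mp h))
  · exact Or.inr (Or.inr (sub_eq_zero.mp h))

end PtAux

namespace PtAux

lemma c2 (n : ℕ) : (n + 2).choose 2 * 2 = (n + 2) * (n + 1) := by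
  induction n with
  | zero => rfl
  | succ n ih =>
    rw [show n + 1 + 2 = (n + 2) + 1 from rfl, Nat.choose_succ_succ, Nat.choose_one_right,
      Nat.add_mul, ih]
    ring

lemma c3 (n : ℕ) : (n + 2).choose 3 * 6 = (n + 2) * (n + 1) * n := by
  induction n with
  | zero => rfl
  | succ n ih =>
    rw [show n + 1 + 2 = (n + 2) + 1 from rfl, Nat.choose_succ_succ, Nat.add_mul, ih,
      show (n + 2).choose 2 * 6 = ((n + 2).choose 2 * 2) * 3 from by ring, c2 n]
    ring

lemma norm_lam (d : ℕ) : ‖(((d : ℂ) + 2) / 3 : ℂ)‖ = ((d : ℝ) + 2) / 3 := by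
  have h : (((d : ℂ) + 2) / 3 : ℂ) = ((((d : ℝ) + 2) / 3 : ℝ) : ℂ) := by push_cast; ring
  rw [h, Complex.norm_real]
  exact abs_of_nonneg (by positivity)

end PtAux

/-- The partial transpose (on the third factor) of the projection onto the symmetric
subspace of `(ℂ^d)^{⊗3}` has operator norm `(d+2)/3`; equivalently, since
`rank Π = C(d+2,3)`, the operator `Q = (1/rank Π)(1⊗1⊗T)(Π)` satisfies
`‖Q‖ = 2/(d(d+1))`. -/
theorem ptranspose_symProj_norm (d : ℕ) (hd : 1 ≤ d) :
    ‖ptransp3 (symProj3 d)‖ = ((d : ℝ) + 2) / 3 ∧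
    ‖((Nat.choose (d + 2) 3 : ℂ))⁻¹ • ptransp3 (symProj3 d)‖
      = 2 / ((d : ℝ) * ((d : ℝ) + 1)) := by
  haveI : NeZero d := ⟨by omega⟩
  set lam : ℂ := ((d : ℂ) + 2) / 3 with hlam
  -- spectral radius equals ‖lam‖₊
  have hsr : spectralRadius ℂ (ptransp3 (symProj3 d)) = (‖lam‖₊ : ENNReal) := by
    apply le_antisymm
    · rw [spectralRadius]
      refine iSup₂_le fun k hk => ?_
      have hk' := PtAux.hsub hk
      simp only [Set.mem_insert_iff, Set.mem_singleton_iff] at hk'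
      have hle : ‖k‖ ≤ ‖lam‖ := by
        rw [PtAux.norm_lam d]
        rcases hk' with rfl | rfl | rfl
        · simp; positivity
        · have h3 : ‖((3 : ℂ))⁻¹‖ = 3⁻¹ := by
            rw [norm_inv]
            norm_num
          rw [h3]
          have hdn : (0 : ℝ) ≤ (d : ℝ) := Nat.cast_nonneg d
          linarith
        · rw [PtAux.norm_lam d]
      exact ENNReal.coe_le_coe.mpr (by rwa [← coe_nnnorm, ← coe_nnnorm,
        NNReal.coe_le_coe] at hle)
    · rw [spectralRadius]
      exact le_iSup₂ (f := fun k (_ : k ∈ spectrum ℂ (ptransp3 (symProj3 d))) =>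
        (‖k‖₊ : ENNReal)) lam (PtAux.hmem d)
  have hself := (PtAux.hAsa (d := d)).spectralRadius_eq_nnnorm
  have hnn : ‖ptransp3 (symProj3 d)‖₊ = ‖lam‖₊ :=
    ENNReal.coe_injective (hself ▸ hsr)
  have hnorm : ‖ptransp3 (symProj3 d)‖ = ((d : ℝ) + 2) / 3 := by
    rw [← coe_nnnorm, hnn, coe_nnnorm, PtAux.norm_lam d]
  refine ⟨hnorm, ?_⟩
  rw [norm_smul, hnorm, norm_inv, Complex.norm_natCast]
  have hc3 := PtAux.c3 d
  have hC : ((d + 2).choose 3 : ℝ) = ((d : ℝ) + 2) * ((d : ℝ) + 1) * (d : ℝ) / 6 := by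
    have : (((d + 2).choose 3 : ℕ) : ℝ) * 6 = ((d : ℝ) + 2) * ((d : ℝ) + 1) * (d : ℝ) := by
      exact_mod_cast congrArg (fun n : ℕ => (n : ℝ)) hc3
    linarith
  rw [hC]
  have hd0 : (d : ℝ) ≠ 0 := by positivity
  have hd1 : (d : ℝ) + 1 ≠ 0 := by positivity
  have hd2 : (d : ℝ) + 2 ≠ 0 := by positivity
  field_simp
  ring
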